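/- Let $X$ be a max-linear Bayesian network: $X_i=\bigvee_{j\in\mathrm{pa}(i)}c_{ij}X_j\vee Z_i$ over a DAG with independent atom-free positive innovations $Z$, so that $X=C^\ast\odot Z$. With probability one, the random impact graph $G(Z)$ on $V$ (with edge $j\to i$ iff $X_i=c^\ast_{ij}Z_j$) is a forest in which every node has at most one parent. -/

import Mathlib

open scoped NNReal

noncomputable section

open MeasureTheory ProbabilityTheory

/-- Max-times matrix-vector product: `(A ⊙ x) i = max_j (A i j * x j)`. -/
def maxMul {d : ℕ} (A : Matrix (Fin d) (Fin d) ℝ≥0) (x : Fin d → ℝ≥0) : Fin d → ℝ≥0 :=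
  fun i => Finset.univ.sup fun j => A i j * x j

/-- Max-times matrix product. -/
def maxMatMul {d : ℕ} (A B : Matrix (Fin d) (Fin d) ℝ≥0) : Matrix (Fin d) (Fin d) ℝ≥0 :=
  Matrix.of fun i j => Finset.univ.sup fun l => A i l * B l j

/-- Max-times matrix powers, with `A^{⊙0}` the identity matrix. -/
def maxPow {d : ℕ} (A : Matrix (Fin d) (Fin d) ℝ≥0) : ℕ → Matrix (Fin d) (Fin d) ℝ≥0
  | 0 => Matrix.of fun i j => if i = j then 1 else 0
  | k + 1 => maxMatMul A (maxPow A k)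

/-- Kleene star `C^* = I ∨ C ∨ C^{⊙2} ∨ ⋯ ∨ C^{⊙(d-1)}` over the max-times semiring. -/
def kleene {d : ℕ} (C : Matrix (Fin d) (Fin d) ℝ≥0) : Matrix (Fin d) (Fin d) ℝ≥0 :=
  Matrix.of fun i j => (Finset.range d).sup fun k => maxPow C k i j

/-- The support digraph of `C` (edge `j → i` iff `C i j ≠ 0`) has no directed cycle. -/
def SupportAcyclic {d : ℕ} (C : Matrix (Fin d) (Fin d) ℝ≥0) : Prop :=
  ¬ ∃ (r : ℕ) (c : Fin (r + 1) → Fin d), Function.Injective c ∧ ∀ t, C (c (t + 1)) (c t) ≠ 0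

/-- Edge `j → i` of the impact graph of the innovation vector `z`:
`i ≠ j` and `X i = c^*_{ij} * z j`, where `X = C^* ⊙ z`. -/
def impactEdge {d : ℕ} (C : Matrix (Fin d) (Fin d) ℝ≥0) (z : Fin d → ℝ≥0) (i j : Fin d) : Prop :=
  i ≠ j ∧ maxMul (kleene C) z i = kleene C i j * z j

-- AUX

lemma kleene_diag {d : ℕ} (C : Matrix (Fin d) (Fin d) ℝ≥0) (i : Fin d) :
    1 ≤ kleene C i i := by
  have h0 : (0 : ℕ) ∈ Finset.range d := Finset.mem_range.2 i.pos
  have h1 : maxPow C 0 i i ≤ (Finset.range d).sup fun k => maxPow C k i i :=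
    Finset.le_sup (f := fun k => maxPow C k i i) h0
  simpa [kleene, maxPow, Matrix.of_apply] using h1

lemma maxMul_pos {d : ℕ} (C : Matrix (Fin d) (Fin d) ℝ≥0) {z : Fin d → ℝ≥0}
    (hz : ∀ j, 0 < z j) (i : Fin d) : 0 < maxMul (kleene C) z i := by
  have h1 : kleene C i i * z i ≤ Finset.univ.sup fun j => kleene C i j * z j :=
    Finset.le_sup (f := fun j => kleene C i j * z j) (Finset.mem_univ i)
  have h2 : 0 < kleene C i i * z i :=
    mul_pos (lt_of_lt_of_le one_pos (kleene_diag C i)) (hz i)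
  exact lt_of_lt_of_le h2 h1

/-- From a nonzero power entry, get a TransGen path in the support graph. -/
lemma maxPow_transGen {d : ℕ} (C : Matrix (Fin d) (Fin d) ℝ≥0) :
    ∀ (k : ℕ) (i j : Fin d), maxPow C k i j ≠ 0 →
      (k = 0 ∧ i = j) ∨ Relation.TransGen (fun a b => C b a ≠ 0) j i := by
  intro k
  induction k with
  | zero =>
    intro i j h
    left
    refine ⟨rfl, ?_⟩
    by_contra hij
    simp [maxPow, Matrix.of_apply, hij] at h
  | succ k ih =>
    intro i j h
    right
    have : ∃ l, C i l * maxPow C k l j ≠ 0 := by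
      by_contra hall
      push_neg at hall
      have : maxPow C (k+1) i j = 0 := by
        simp only [maxPow, maxMatMul, Matrix.of_apply]
        exact (Finset.sup_eq_bot_iff _ _).2 fun l _ => hall l
      exact h this
    obtain ⟨l, hl⟩ := this
    have hCil : C i l ≠ 0 := fun h0 => hl (by simp [h0])
    have hpow : maxPow C k l j ≠ 0 := fun h0 => hl (by simp [h0])
    rcases ih l j hpow with ⟨_, rfl⟩ | htg
    · exact Relation.TransGen.single hCil
    · exact Relation.TransGen.tail htg hCil

lemma kleene_transGen {d : ℕ} (C : Matrix (Fin d) (Fin d) ℝ≥0) {i j : Fin d}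
    (h : kleene C i j ≠ 0) (hij : i ≠ j) :
    Relation.TransGen (fun a b => C b a ≠ 0) j i := by
  have : ∃ k ∈ Finset.range d, maxPow C k i j ≠ 0 := by
    by_contra hall
    push_neg at hall
    exact h (by simpa [kleene, Matrix.of_apply] using (Finset.sup_eq_bot_iff _ _).2 hall)
  obtain ⟨k, -, hk⟩ := this
  rcases maxPow_transGen C k i j hk with ⟨-, h2⟩ | h2
  · exact absurd h2 hij
  · exact h2

/-- TransGen gives an explicit walk. -/
lemma transGen_walk {d : ℕ} (C : Matrix (Fin d) (Fin d) ℝ≥0) {a b : Fin d}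
    (h : Relation.TransGen (fun x y => C y x ≠ 0) a b) :
    ∃ n, 0 < n ∧ ∃ p : ℕ → Fin d, p 0 = a ∧ p n = b ∧
      ∀ t < n, C (p (t+1)) (p t) ≠ 0 := by
  induction h with
  | single hr =>
    rename_i c
    refine ⟨1, one_pos, fun t => if t = 0 then a else c, by simp, by simp, ?_⟩
    intro t ht
    interval_cases t
    simpa using hr
  | tail h1 hr ih =>
    rename_i b' c'
    obtain ⟨n, hn, p, hp0, hpn, hedge⟩ := ih
    refine ⟨n + 1, Nat.succ_pos n, fun s => if s ≤ n then p s else c', by simp [hp0], by simp, ?_⟩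
    intro s hs
    rcases Nat.lt_or_ge s n with h' | h'
    · have e1 : s + 1 ≤ n := h'
      simp only [if_pos e1, if_pos (le_of_lt h')]
      exact hedge s h'
    · have h'' : s = n := by omega
      simp only [h'', if_neg (show ¬ n + 1 ≤ n by omega), if_pos (le_refl n), hpn]
      exact hr

/-- A closed walk in the support graph contradicts acyclicity. -/
lemma closed_walk_false {d : ℕ} (C : Matrix (Fin d) (Fin d) ℝ≥0) (hC : SupportAcyclic C)
    {x : Fin d} (h : Relation.TransGen (fun a b => C b a ≠ 0) x x) : False := by
  classical
  obtain ⟨n, hn, p, hp0, hpn, hedge⟩ := transGen_walk C h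
  have hP : ∃ m, 0 < m ∧ ∃ q : ℕ → Fin d, q 0 = q m ∧ ∀ t < m, C (q (t+1)) (q t) ≠ 0 :=
    ⟨n, hn, p, by rw [hp0, hpn], hedge⟩
  have hmin : ∀ k, (0 < k ∧ ∃ q : ℕ → Fin d, q 0 = q k ∧ ∀ t < k, C (q (t+1)) (q t) ≠ 0) →
      Nat.find hP ≤ k := fun k hk => Nat.find_min' hP hk
  obtain ⟨hm0, q, hq, hqe⟩ := Nat.find_spec hP
  set m := Nat.find hP with hmdef
  clear_value m
  have hshort : ∀ a b : ℕ, a < b → b < m → q a ≠ q b := by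
    intro a b hlt hb hab
    have hQ : 0 < b - a ∧ ∃ q' : ℕ → Fin d, q' 0 = q' (b - a) ∧
        ∀ t < b - a, C (q' (t+1)) (q' t) ≠ 0 := by
      refine ⟨by omega, fun t => q (a + t), ?_, ?_⟩
      · show q (a + 0) = q (a + (b - a))
        rw [Nat.add_zero, Nat.add_sub_cancel' (le_of_lt hlt)]
        exact hab
      · intro t ht
        have h1 : a + t < m := by omega
        have h2 := hqe (a + t) h1
        show C (q (a + (t + 1))) (q (a + t)) ≠ 0
        rwa [← Nat.add_assoc]
    have := hmin _ hQ
    omega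
  have hinj : ∀ a b : ℕ, a < m → b < m → q a = q b → a = b := by
    intro a b ha hb hab
    rcases Nat.lt_trichotomy a b with h' | h' | h'
    · exact absurd hab (hshort a b h' hb)
    · exact h'
    · exact absurd hab.symm (hshort b a h' ha)
  have hm1 : m - 1 + 1 = m := by omega
  apply hC
  refine ⟨m - 1, fun t => q t.val, ?_, ?_⟩
  · intro a b hab
    have ha : (a : ℕ) < m := by have := a.isLt; omega
    have hb : (b : ℕ) < m := by have := b.isLt; omega
    exact Fin.ext (hinj a.val b.val ha hb hab)
  · intro t
    have ht : (t : ℕ) < m := by have := t.isLt; omega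
    have haux : ∀ a : ℕ, a < m → (a + 1 % (m - 1 + 1)) % (m - 1 + 1) = (a + 1) % m := by
      intro a ha
      rw [hm1]
      conv_rhs => rw [Nat.add_mod, Nat.mod_eq_of_lt ha]
    have hval : ((t + 1 : Fin (m - 1 + 1)) : ℕ) = ((t : ℕ) + 1) % m := by
      rw [Fin.val_add, Fin.val_one']
      exact haux _ ht
    by_cases hcase : (t : ℕ) + 1 < m
    · have h2 : ((t + 1 : Fin (m - 1 + 1)) : ℕ) = (t : ℕ) + 1 := by
        rw [hval, Nat.mod_eq_of_lt hcase]
      show C (q ((t + 1 : Fin (m - 1 + 1)) : ℕ)) (q (t : ℕ)) ≠ 0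
      rw [h2]
      exact hqe (t : ℕ) ht
    · have htm : (t : ℕ) + 1 = m := by omega
      have h2 : ((t + 1 : Fin (m - 1 + 1)) : ℕ) = 0 := by
        rw [hval, htm, Nat.mod_self]
      show C (q ((t + 1 : Fin (m - 1 + 1)) : ℕ)) (q (t : ℕ)) ≠ 0
      rw [h2, hq]
      have h3 := hqe (t : ℕ) ht
      rwa [htm] at h3


lemma eq_null {Ω : Type*} [MeasurableSpace Ω] (μ : Measure Ω) [IsProbabilityMeasure μ]
    {W Y : Ω → ℝ≥0} (hW : Measurable W) (hY : Measurable Y)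
    (hind : IndepFun W Y μ) (hatomY : ∀ c, μ {ω | Y ω = c} = 0) :
    μ {ω | W ω = Y ω} = 0 := by
  have hmap : μ.map (fun ω => (W ω, Y ω)) = (μ.map W).prod (μ.map Y) :=
    (indepFun_iff_map_prod_eq_prod_map_map hW.aemeasurable hY.aemeasurable).mp hind
  have hD : MeasurableSet {p : ℝ≥0 × ℝ≥0 | p.1 = p.2} :=
    measurableSet_eq_fun measurable_fst measurable_snd
  have hpre : {ω | W ω = Y ω} = (fun ω => (W ω, Y ω)) ⁻¹' {p : ℝ≥0 × ℝ≥0 | p.1 = p.2} := rfl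
  rw [hpre, ← Measure.map_apply (hW.prodMk hY) hD, hmap, Measure.prod_apply hD]
  have hz : ∀ x : ℝ≥0, (μ.map Y) (Prod.mk x ⁻¹' {p : ℝ≥0 × ℝ≥0 | p.1 = p.2}) = 0 := by
    intro x
    have hxs : Prod.mk x ⁻¹' {p : ℝ≥0 × ℝ≥0 | p.1 = p.2} = {x} := by
      ext y
      simp [eq_comm]
    rw [hxs, Measure.map_apply hY (measurableSet_singleton x)]
    exact hatomY x
  simp only [hz, MeasureTheory.lintegral_zero]

/-- In a max-linear Bayesian network with independent positive atom-free innovations,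
the impact graph is almost surely a forest in which every node has at most one parent. -/
theorem stmt6 {d : ℕ} (C : Matrix (Fin d) (Fin d) ℝ≥0) (hC : SupportAcyclic C)
    {Ω : Type*} [MeasurableSpace Ω] (μ : Measure Ω) [IsProbabilityMeasure μ]
    (Z : Fin d → Ω → ℝ≥0) (hmeas : ∀ i, Measurable (Z i))
    (hindep : iIndepFun Z μ)
    (hpos : ∀ i ω, 0 < Z i ω)
    (hatom : ∀ i (c : ℝ≥0), μ {ω | Z i ω = c} = 0) :
    ∀ᵐ ω ∂μ,
      (∀ i j j', impactEdge C (fun k => Z k ω) i j → impactEdge C (fun k => Z k ω) i j' →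
        j = j') ∧
      ¬ ∃ (r : ℕ) (c : Fin (r + 1) → Fin d), Function.Injective c ∧
        ∀ t, impactEdge C (fun k => Z k ω) (c (t + 1)) (c t) := by
  have hE : ∀ᵐ ω ∂μ, ∀ i j j' : Fin d, j ≠ j' → kleene C i j ≠ 0 → kleene C i j' ≠ 0 →
      kleene C i j * Z j ω ≠ kleene C i j' * Z j' ω := by
    rw [ae_all_iff]
    intro i
    rw [ae_all_iff]
    intro j
    rw [ae_all_iff]
    intro j'
    by_cases hjj : j = j'
    · exact Filter.Eventually.of_forall fun ω h => absurd hjj h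
    by_cases hk : kleene C i j = 0
    · exact Filter.Eventually.of_forall fun ω _ h2 _ => absurd hk h2
    by_cases hk' : kleene C i j' = 0
    · exact Filter.Eventually.of_forall fun ω _ _ h3 => absurd hk' h3
    have hind : IndepFun (fun ω => kleene C i j * Z j ω)
        (fun ω => kleene C i j' * Z j' ω) μ := by
      have h0 : IndepFun (Z j) (Z j') μ := hindep.indepFun hjj
      exact h0.comp (measurable_id.const_mul (kleene C i j))
        (measurable_id.const_mul (kleene C i j'))
    have hnull : μ {ω | kleene C i j * Z j ω = kleene C i j' * Z j' ω} = 0 := by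
      refine eq_null μ ((hmeas j).const_mul _) ((hmeas j').const_mul _) hind ?_
      intro cc
      have hset : {ω | kleene C i j' * Z j' ω = cc} = {ω | Z j' ω = cc / kleene C i j'} := by
        ext ω
        simp only [Set.mem_setOf_eq]
        rw [mul_comm, ← eq_div_iff hk']
      rw [hset]
      exact hatom j' _
    filter_upwards [measure_eq_zero_iff_ae_notMem.mp hnull] with ω hω
    exact fun _ _ _ => hω
  filter_upwards [hE] with ω hω
  have hzpos : ∀ j, 0 < Z j ω := fun j => hpos j ω
  constructor
  · intro i j j' h1 h2
    obtain ⟨hij, e1⟩ := h1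
    obtain ⟨hij', e2⟩ := h2
    by_contra hjj
    have hp1 : 0 < maxMul (kleene C) (fun k => Z k ω) i := maxMul_pos C hzpos i
    have hk : kleene C i j ≠ 0 := by
      intro h0
      rw [e1, h0, zero_mul] at hp1
      exact lt_irrefl 0 hp1
    have hk' : kleene C i j' ≠ 0 := by
      intro h0
      rw [e2, h0, zero_mul] at hp1
      exact lt_irrefl 0 hp1
    exact hω i j j' hjj hk hk' (e1.symm.trans e2)
  · rintro ⟨r, c, hcinj, hcyc⟩
    have hedge : ∀ t : Fin (r+1),
        Relation.TransGen (fun a b => C b a ≠ 0) (c t) (c (t+1)) := by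
      intro t
      obtain ⟨hne, he⟩ := hcyc t
      have hp1 : 0 < maxMul (kleene C) (fun k => Z k ω) (c (t+1)) := maxMul_pos C hzpos _
      have hk : kleene C (c (t+1)) (c t) ≠ 0 := by
        intro h0
        rw [he, h0, zero_mul] at hp1
        exact lt_irrefl 0 hp1
      exact kleene_transGen C hk hne
    open Fin.NatCast in
    have hchain : ∀ n : ℕ,
        Relation.TransGen (fun a b => C b a ≠ 0) (c 0) (c ((n+1 : ℕ) : Fin (r+1))) := by
      intro n
      induction n with
      | zero => simpa using hedge 0
      | succ n ih =>
        have step := hedge ((n+1 : ℕ) : Fin (r+1))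
        have hcast : (((n+1)+1 : ℕ) : Fin (r+1)) = ((n+1 : ℕ) : Fin (r+1)) + 1 := by
          push_cast
          ring
        rw [hcast]
        exact ih.trans step
    have hloop := hchain r
    open Fin.NatCast in
    have hcast2 : ((r+1 : ℕ) : Fin (r+1)) = 0 := by
      exact_mod_cast Fin.natCast_self (r+1)
    rw [hcast2] at hloop
    exact closed_walk_false C hC hloop

end
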